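/- The map (x₁,x₂) ↦ |x₁| + |x₂| − |x₁||x₂|/(|x₁|+|x₂|) for (x₁,x₂) ≠ (0,0), and 0 at the origin, defines a norm on ℝ². -/

import Mathlib

noncomputable def Dnorm (x : ℝ × ℝ) : ℝ :=
  if x = 0 then 0 else |x.1| + |x.2| - |x.1| * |x.2| / (|x.1| + |x.2|)

private lemma f_eq (a b : ℝ) (h : 0 < a + b) :
    a + b - a * b / (a + b) = (a ^ 2 + a * b + b ^ 2) / (a + b) := by
  field_simp; ring

private lemma f_ge (a b : ℝ) (ha : 0 ≤ a) (hb : 0 ≤ b) (h : 0 < a + b) :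
    b ≤ a + b - a * b / (a + b) := by
  rw [f_eq a b h, le_div_iff₀ h]; nlinarith [sq_nonneg a]

private lemma f_mono (a b A B : ℝ) (ha : 0 ≤ a) (hb : 0 ≤ b) (haA : a ≤ A) (hbB : b ≤ B)
    (h : 0 < a + b) :
    a + b - a * b / (a + b) ≤ A + B - A * B / (A + B) := by
  have hAB : 0 < A + B := lt_of_lt_of_le h (add_le_add haA hbB)
  rw [f_eq a b h, f_eq A B hAB, div_le_div_iff₀ h hAB]
  nlinarith [mul_nonneg (sub_nonneg.2 haA) (sub_nonneg.2 hbB),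
    mul_nonneg ha (sub_nonneg.2 hbB), mul_nonneg hb (sub_nonneg.2 haA),
    mul_nonneg (mul_nonneg ha hb) (sub_nonneg.2 haA),
    mul_nonneg (mul_nonneg ha hb) (sub_nonneg.2 hbB),
    mul_nonneg (mul_nonneg ha ha) (sub_nonneg.2 hbB),
    mul_nonneg (mul_nonneg hb hb) (sub_nonneg.2 haA),
    sq_nonneg (A - a), sq_nonneg (B - b)]

private lemma f_subadd (a1 b1 a2 b2 : ℝ) (ha1 : 0 ≤ a1) (hb1 : 0 ≤ b1) (ha2 : 0 ≤ a2)
    (hb2 : 0 ≤ b2) (h1 : 0 < a1 + b1) (h2 : 0 < a2 + b2) :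
    (a1 + a2) + (b1 + b2) - (a1 + a2) * (b1 + b2) / ((a1 + a2) + (b1 + b2)) ≤
      (a1 + b1 - a1 * b1 / (a1 + b1)) + (a2 + b2 - a2 * b2 / (a2 + b2)) := by
  have hs : 0 < (a1 + a2) + (b1 + b2) := by linarith
  rw [f_eq _ _ hs, f_eq _ _ h1, f_eq _ _ h2,
    div_add_div _ _ (ne_of_gt h1) (ne_of_gt h2), div_le_div_iff₀ hs (mul_pos h1 h2)]
  nlinarith [sq_nonneg (a1 * b2 - a2 * b1), mul_pos h1 h2,
    mul_nonneg (mul_nonneg ha1 hb2) (mul_nonneg ha2 hb1)]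

theorem stmt6 :
    (Dnorm 0 = 0) ∧
    (∀ x : ℝ × ℝ, Dnorm x = 0 → x = 0) ∧
    (∀ x : ℝ × ℝ, 0 ≤ Dnorm x) ∧
    (∀ (c : ℝ) (x : ℝ × ℝ), Dnorm (c • x) = |c| * Dnorm x) ∧
    (∀ x y : ℝ × ℝ, Dnorm (x + y) ≤ Dnorm x + Dnorm y) := by
  have habs : ∀ x : ℝ × ℝ, x ≠ 0 → 0 < |x.1| + |x.2| := by
    intro x hx
    rcases Prod.mk.injEq x.1 x.2 0 0 ▸ (fun h => hx (Prod.ext_iff.2 h)) with h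
    by_contra hle
    push_neg at hle
    have h1 : |x.1| = 0 := le_antisymm (by nlinarith [abs_nonneg x.1, abs_nonneg x.2]) (abs_nonneg _)
    have h2 : |x.2| = 0 := le_antisymm (by nlinarith [abs_nonneg x.1, abs_nonneg x.2]) (abs_nonneg _)
    exact hx (Prod.ext_iff.2 ⟨abs_eq_zero.1 h1, abs_eq_zero.1 h2⟩)
  have hpos : ∀ x : ℝ × ℝ, x ≠ 0 → 0 < Dnorm x := by
    intro x hx
    have h := habs x hx
    rw [Dnorm, if_neg hx]
    rcases lt_or_ge 0 |x.1| with h1 | h1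
    · calc (0:ℝ) < |x.1| := h1
        _ ≤ |x.2| + |x.1| - |x.2| * |x.1| / (|x.2| + |x.1|) :=
          f_ge _ _ (abs_nonneg _) (abs_nonneg _) (by linarith)
        _ = |x.1| + |x.2| - |x.1| * |x.2| / (|x.1| + |x.2|) := by ring_nf
    · have h2 : 0 < |x.2| := by linarith [abs_nonneg x.1]
      calc (0:ℝ) < |x.2| := h2
        _ ≤ |x.1| + |x.2| - |x.1| * |x.2| / (|x.1| + |x.2|) :=
          f_ge _ _ (abs_nonneg _) (abs_nonneg _) h
  have hnonneg : ∀ x : ℝ × ℝ, 0 ≤ Dnorm x := by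
    intro x
    by_cases hx : x = 0
    · simp [Dnorm, hx]
    · exact le_of_lt (hpos x hx)
  refine ⟨by simp [Dnorm], ?_, hnonneg, ?_, ?_⟩
  · intro x hx
    by_contra h
    exact absurd hx (ne_of_gt (hpos x h))
  · intro c x
    by_cases hc : c = 0
    · simp [Dnorm, hc]
    by_cases hx : x = 0
    · simp [Dnorm, hx]
    have hcx : c • x ≠ 0 := smul_ne_zero hc hx
    have h := habs x hx
    rw [Dnorm, Dnorm, if_neg hcx, if_neg hx]
    have hc' : 0 < |c| := abs_pos.2 hc
    simp only [Prod.smul_fst, Prod.smul_snd, smul_eq_mul, abs_mul]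
    have hne : (0:ℝ) < |c| * |x.1| + |c| * |x.2| := by nlinarith
    field_simp [hne.ne', h.ne']
  · intro x y
    by_cases hxy : x + y = 0
    · rw [Dnorm, if_pos hxy]
      exact add_nonneg (hnonneg x) (hnonneg y)
    by_cases hx : x = 0
    · simp only [hx, zero_add]
      exact le_add_of_nonneg_left (hnonneg 0)
    by_cases hy : y = 0
    · simp only [hy, add_zero]
      exact le_add_of_nonneg_right (hnonneg 0)
    have hxs := habs x hx
    have hys := habs y hy
    have hxys := habs _ hxy
    rw [Dnorm, Dnorm, Dnorm, if_neg hxy, if_neg hx, if_neg hy]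
    have h1 : |(x + y).1| ≤ |x.1| + |y.1| := by
      simpa using abs_add_le x.1 y.1
    have h2 : |(x + y).2| ≤ |x.2| + |y.2| := by
      simpa using abs_add_le x.2 y.2
    calc |(x + y).1| + |(x + y).2| - |(x + y).1| * |(x + y).2| / (|(x + y).1| + |(x + y).2|)
        ≤ (|x.1| + |y.1|) + (|x.2| + |y.2|) -
            (|x.1| + |y.1|) * (|x.2| + |y.2|) / ((|x.1| + |y.1|) + (|x.2| + |y.2|)) :=
          f_mono _ _ _ _ (abs_nonneg _) (abs_nonneg _) h1 h2 hxys
      _ ≤ _ := f_subadd |x.1| |x.2| |y.1| |y.2| (abs_nonneg _) (abs_nonneg _)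
            (abs_nonneg _) (abs_nonneg _) hxs hys
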